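/- Suppose a probability measure μ on a group G acting on a space X satisfies: there exist constants a ∈ (0,1), b > 0, N ∈ ℕ with ∫ ht(gx) dμ^{*N}(g) ≤ a·ht(x) + b for all x, and there is C₁ > 1 with C₁⁻¹ ht(x) ≤ ht(gx) ≤ C₁ ht(x) for all g in the support of μ^{*ℓ}, 1 ≤ ℓ ≤ N. Then for all n ≥ 1, x ∈ X, and h > 0, μ^{*n}({g : ht(gx) ≥ h}) ≤ C₁ h⁻¹ (ht(x) + b/(1-a)). -/

import Mathlib

open MeasureTheory

/-- `n`-fold convolution power of a measure on a monoid. -/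
noncomputable def convPow {G : Type*} [Monoid G] [MeasurableSpace G]
    (μ : Measure G) : ℕ → Measure G
  | 0 => Measure.dirac 1
  | n + 1 => (convPow μ n).mconv μ

section Aux

variable {G : Type*} [Group G] [MeasurableSpace G]

lemma convPow_finite (μ : Measure G) [IsProbabilityMeasure μ] (n : ℕ) :
    IsFiniteMeasure (convPow μ n) := by
  induction n with
  | zero => exact inferInstanceAs (IsFiniteMeasure (Measure.dirac (1 : G)))
  | succ n ih =>
    have : IsFiniteMeasure (convPow μ n) := ih
    exact inferInstanceAs (IsFiniteMeasure ((convPow μ n).mconv μ))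

lemma convPow_zero_mono (μ : Measure G) {j k : ℕ} (hjk : j ≤ k)
    (h : convPow μ j = 0) : convPow μ k = 0 := by
  obtain ⟨d, rfl⟩ := Nat.exists_eq_add_of_le hjk
  induction d with
  | zero => simpa using h
  | succ d ih =>
    show (convPow μ (j + d)).mconv μ = 0
    rw [ih (Nat.le_add_right j d)]
    exact Measure.zero_mconv μ

variable {X : Type*} [MeasurableSpace X] [MulAction G X] [MeasurableSMul G X]

/-- One-step disintegration of the integral against a convolution power. -/
lemma convPow_step (ht : X → ℝ) (hmeas : Measurable ht)
    (μ : Measure G) [IsProbabilityMeasure μ] (j : ℕ) (x : X)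
    (hAE : AEMeasurable (fun p : G × G => p.1 * p.2) ((convPow μ j).prod μ))
    (hintj : Integrable (fun g => ht (g • x)) (convPow μ (j + 1))) :
    (∫ g, ht (g • x) ∂(convPow μ (j + 1)))
        = ∫ u, ∫ g, ht (g • (u • x)) ∂(convPow μ j) ∂μ ∧
      Integrable (fun u => ∫ g, ht (g • (u • x)) ∂(convPow μ j)) μ := by
  have hfin := convPow_finite μ j
  have hf : Measurable fun g : G => ht (g • x) := hmeas.comp (measurable_smul_const x)
  have hmap : convPow μ (j + 1)
      = Measure.map (fun p : G × G => p.1 * p.2) ((convPow μ j).prod μ) := rfl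
  rw [hmap] at hintj
  have hI : Integrable (fun p : G × G => ht ((p.1 * p.2) • x)) ((convPow μ j).prod μ) := by
    have := (integrable_map_measure hf.aestronglyMeasurable hAE).mp hintj
    exact this
  constructor
  · rw [hmap, integral_map hAE hf.aestronglyMeasurable]
    rw [integral_prod_symm _ hI]
    simp [mul_smul]
  · have := hI.integral_prod_right
    simpa [mul_smul] using this

end Aux

/-- quantitative non-divergence from the contraction hypothesis. -/
theorem quantitative_nondivergence
    {G : Type*} [Group G] [MeasurableSpace G]
    {X : Type*} [MeasurableSpace X] [MulAction G X] [MeasurableSMul G X]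
    (ht : X → ℝ) (hht : ∀ x, 1 ≤ ht x) (hmeas : Measurable ht)
    (μ : Measure G) [IsProbabilityMeasure μ]
    (a b C₁ : ℝ) (ha0 : 0 < a) (ha1 : a < 1) (hb : 0 < b) (hC : 1 < C₁)
    (N : ℕ) (hN : 1 ≤ N)
    (hint : ∀ (n : ℕ) (x : X), Integrable (fun g => ht (g • x)) (convPow μ n))
    (hdrift : ∀ x : X, ∫ g, ht (g • x) ∂(convPow μ N) ≤ a * ht x + b)
    (hcomp : ∀ ℓ : ℕ, 1 ≤ ℓ → ℓ ≤ N →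
      ∀ᵐ g ∂(convPow μ ℓ), ∀ x : X,
        C₁⁻¹ * ht x ≤ ht (g • x) ∧ ht (g • x) ≤ C₁ * ht x) :
    ∀ n : ℕ, 1 ≤ n → ∀ x : X, ∀ h : ℝ, 0 < h →
      ((convPow μ n) {g : G | h ≤ ht (g • x)}).toReal
        ≤ C₁ * h⁻¹ * (ht x + b / (1 - a)) := by
  have h1a : (0 : ℝ) < 1 - a := by linarith
  have hba : (0 : ℝ) ≤ b / (1 - a) := div_nonneg hb.le h1a.le
  intro n hn x h hpos
  have hRHS : (0 : ℝ) ≤ C₁ * h⁻¹ * (ht x + b / (1 - a)) := by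
    have hx := hht x
    have : (0 : ℝ) ≤ ht x + b / (1 - a) := by linarith
    positivity
  by_cases hzero : convPow μ n = 0
  · simpa [hzero] using hRHS
  -- good case: all multiplication maps are a.e. measurable up to stage n
  have hAEall : ∀ j, j < n →
      AEMeasurable (fun p : G × G => p.1 * p.2) ((convPow μ j).prod μ) := by
    intro j hj
    by_contra hA
    refine hzero (convPow_zero_mono μ hj ?_)
    show (convPow μ j).mconv μ = 0
    unfold Measure.mconv
    exact Measure.map_of_not_aemeasurable hA
  have hprob : ∀ j, j ≤ n → IsProbabilityMeasure (convPow μ j) := by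
    intro j hj
    induction j with
    | zero => exact inferInstanceAs (IsProbabilityMeasure (Measure.dirac (1 : G)))
    | succ j ih =>
      have hpj : IsProbabilityMeasure (convPow μ j) := ih (le_trans (Nat.le_succ j) hj)
      have hAE := hAEall j (lt_of_lt_of_le (Nat.lt_succ_self j) hj)
      constructor
      show Measure.map (fun p : G × G => p.1 * p.2) ((convPow μ j).prod μ) Set.univ = 1
      rw [Measure.map_apply_of_aemeasurable hAE MeasurableSet.univ, Set.preimage_univ]
      exact measure_univ
  -- base integral
  have hM0 : ∀ y : X, (∫ g, ht (g • y) ∂(convPow μ 0)) = ht y := by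
    intro y
    show ∫ g, ht (g • y) ∂(Measure.dirac (1 : G)) = ht y
    have hsm : StronglyMeasurable fun g : G => ht (g • y) :=
      (hmeas.comp (measurable_smul_const y)).stronglyMeasurable
    rw [integral_dirac' _ _ hsm, one_smul]
  -- drift recursion
  have hchain : ∀ k : ℕ, N + k ≤ n → ∀ y : X,
      (∫ g, ht (g • y) ∂(convPow μ (N + k)))
        ≤ a * (∫ g, ht (g • y) ∂(convPow μ k)) + b := by
    intro k
    induction k with
    | zero =>
      intro _ y
      simpa [hM0 y] using hdrift y
    | succ k ih =>
      intro hle y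
      have hle1 : N + k ≤ n := by omega
      have hltNk : N + k < n := by omega
      have hltk : k < n := by omega
      obtain ⟨heq1, hint1⟩ := convPow_step ht hmeas μ (N + k) y (hAEall _ hltNk)
        (hint (N + k + 1) y)
      obtain ⟨heq2, hint2⟩ := convPow_step ht hmeas μ k y (hAEall _ hltk)
        (hint (k + 1) y)
      have hNk1 : N + (k + 1) = (N + k) + 1 := by omega
      rw [hNk1, heq1, heq2]
      have hbig : Integrable
          (fun u => a * (∫ g, ht (g • (u • y)) ∂(convPow μ k)) + b) μ :=
        (hint2.const_mul a).add (integrable_const b)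
      calc ∫ u, ∫ g, ht (g • (u • y)) ∂(convPow μ (N + k)) ∂μ
          ≤ ∫ u, (a * (∫ g, ht (g • (u • y)) ∂(convPow μ k)) + b) ∂μ := by
            refine integral_mono hint1 hbig ?_
            intro u
            exact ih hle1 (u • y)
        _ = a * (∫ u, ∫ g, ht (g • (u • y)) ∂(convPow μ k) ∂μ) + b := by
            rw [integral_add (hint2.const_mul a) (integrable_const b),
              integral_const_mul, integral_const]
            simp
  -- main bound on the integral
  have hbound : ∀ m : ℕ, 1 ≤ m → m ≤ n → ∀ y : X,
      (∫ g, ht (g • y) ∂(convPow μ m)) ≤ C₁ * ht y + b / (1 - a) := by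
    intro m
    induction m using Nat.strong_induction_on with
    | _ m IH =>
      intro hm1 hmn y
      by_cases hmN : m ≤ N
      · -- small m : use comparability
        have hcm := hcomp m hm1 hmN
        have hpm : IsProbabilityMeasure (convPow μ m) := hprob m hmn
        have : (∫ g, ht (g • y) ∂(convPow μ m)) ≤ ∫ _g, C₁ * ht y ∂(convPow μ m) := by
          refine integral_mono_ae (hint m y) (integrable_const _) ?_
          filter_upwards [hcm] with g hg using (hg y).2
        rw [integral_const] at this
        simp only [measure_univ, ENNReal.toReal_one, probReal_univ, one_smul] at this
        linarith
      · -- large m : use the drift recursion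
        push_neg at hmN
        set k := m - N with hk
        have hmk : m = N + k := by omega
        have hk1 : 1 ≤ k := by omega
        have hkm : k < m := by omega
        have h1 := hchain k (by omega) y
        have h2 := IH k hkm hk1 (by omega) y
        rw [hmk]
        have hCy : (0 : ℝ) ≤ C₁ * ht y := by
          have := hht y; nlinarith
        have key : a * (b / (1 - a)) + b = b / (1 - a) := by
          field_simp
          ring
        nlinarith [mul_le_mul_of_nonneg_left h2 ha0.le]
  -- Markov's inequality
  have hnonneg : 0 ≤ᵐ[convPow μ n] fun g : G => ht (g • x) :=
    Filter.Eventually.of_forall fun g => le_trans zero_le_one (hht (g • x))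
  have hmarkov := mul_meas_ge_le_integral_of_nonneg hnonneg (hint n x) h
  have hIb := hbound n hn le_rfl x
  have hfinal : h * ((convPow μ n) {g : G | h ≤ ht (g • x)}).toReal
      ≤ C₁ * (ht x + b / (1 - a)) := by
    refine le_trans hmarkov (le_trans hIb ?_)
    nlinarith
  rw [show C₁ * h⁻¹ * (ht x + b / (1 - a)) = (C₁ * (ht x + b / (1 - a))) / h by
    rw [div_eq_mul_inv]; ring]
  rw [le_div_iff₀ hpos]
  nlinarith
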